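/- Let g : (0,∞) → ℝ be given by a convergent power series g(y) = ∑_{j=n+1}^{n+l} a_j y^j - ∑_{j=n+l+1}^∞ a_j y^j with all a_j > 0 and l ≥ 1. Then g has exactly one zero in (0,∞). -/

import Mathlib

set_option maxHeartbeats 1000000


open Filter

/-- If `g : (0,∞) → ℝ` is given by a convergent power series
`g(y) = ∑_{j=n+1}^{n+l} a_j y^j - ∑_{j=n+l+1}^∞ a_j y^j` with all `a_j > 0` and
`l ≥ 1`, then `g` has exactly one zero in `(0,∞)`. -/
theorem stmt_17 (n l : ℕ) (hl : 1 ≤ l) (a : ℕ → ℝ) (ha : ∀ j, 0 < a j) (g : ℝ → ℝ)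
    (hg : ∀ y : ℝ, 0 < y →
      HasSum (fun j : ℕ =>
        (if j ≤ n then 0 else if j ≤ n + l then a j * y ^ j else -(a j * y ^ j))) (g y)) :
    ∃! y : ℝ, 0 < y ∧ g y = 0 := by
  classical
  set c : ℕ → ℝ → ℝ := fun j y =>
    if j ≤ n then 0 else if j ≤ n + l then a j * y ^ j else -(a j * y ^ j) with hc
  set G : ℝ → ℝ := fun y => ∑' j, c j y with hGdef
  have hGsum : ∀ y : ℝ, 0 < y → HasSum (fun j => c j y) (g y) := fun y hy => hg y hy
  have hGg : ∀ y : ℝ, 0 < y → G y = g y := fun y hy => (hGsum y hy).tsum_eq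
  have hsum : ∀ y : ℝ, 0 < y → Summable (fun j => c j y) := fun y hy => (hGsum y hy).summable
  -- summability of the full positive series
  have hsa : ∀ y : ℝ, 0 < y → Summable (fun j => a j * y ^ j) := by
    intro y hy
    rw [← summable_nat_add_iff (n + l + 1)]
    have h1 : Summable (fun k => c (k + (n + l + 1)) y) :=
      (summable_nat_add_iff (f := fun j => c j y) (n + l + 1)).2 (hsum y hy)
    refine h1.neg.congr fun k => ?_
    simp only [hc]
    rw [if_neg (by omega), if_neg (by omega), neg_neg]
  -- uniform bound
  have habs : ∀ (j : ℕ) (x R : ℝ), 0 ≤ x → x ≤ R → |c j x| ≤ a j * R ^ j := by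
    intro j x R hx hxR
    have hxj : x ^ j ≤ R ^ j := pow_le_pow_left₀ hx hxR j
    have h0 : (0 : ℝ) ≤ x ^ j := pow_nonneg hx j
    have hR0 : (0 : ℝ) ≤ R := le_trans hx hxR
    simp only [hc]
    have hb : (0 : ℝ) ≤ a j * x ^ j := mul_nonneg (ha j).le h0
    split_ifs with h1 h2
    · simpa using mul_nonneg (ha j).le (pow_nonneg hR0 j)
    · rw [abs_of_nonneg hb]
      exact mul_le_mul_of_nonneg_left hxj (ha j).le
    · rw [abs_neg, abs_of_nonneg hb]
      exact mul_le_mul_of_nonneg_left hxj (ha j).le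
  -- continuity
  have hcont : ∀ R : ℝ, 0 < R → ContinuousOn G (Set.Icc 0 R) := by
    intro R hR
    apply continuousOn_tsum (u := fun j => a j * R ^ j)
    · intro j
      simp only [hc]
      split_ifs
      · exact continuousOn_const
      · exact Continuous.continuousOn (by continuity)
      · exact Continuous.continuousOn (by continuity)
    · exact hsa R hR
    · intro j x hx
      rw [Real.norm_eq_abs]
      exact habs j x R hx.1 hx.2
  -- closed forms for the scaled terms
  have hform0 : ∀ (j : ℕ) (z : ℝ), j ≤ n → c j z / z ^ (n + l) = 0 := by
    intro j z h
    simp [hc, if_pos h]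
  have hform1 : ∀ (j : ℕ) (z : ℝ), 0 < z → n < j → j ≤ n + l →
      c j z / z ^ (n + l) = a j / z ^ (n + l - j) := by
    intro j z hz h1 h2
    simp only [hc]
    rw [if_neg (by omega), if_pos h2]
    have hnl : n + l = j + (n + l - j) := by omega
    rw [hnl, pow_add]
    have hzj : z ^ j ≠ 0 := by positivity
    have hzk : z ^ (n + l - j) ≠ 0 := by positivity
    field_simp
    simp [Nat.add_sub_cancel_left]
  have hform2 : ∀ (j : ℕ) (z : ℝ), 0 < z → n + l < j →
      c j z / z ^ (n + l) = -(a j * z ^ (j - (n + l))) := by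
    intro j z hz h
    simp only [hc]
    rw [if_neg (by omega), if_neg (by omega)]
    have hj : j = (n + l) + (j - (n + l)) := by omega
    rw [hj, pow_add]
    have hznl : z ^ (n + l) ≠ 0 := by positivity
    field_simp
    simp [Nat.add_sub_cancel_left]
  -- strict antitonicity of y ↦ G y / y ^ (n + l) on (0, ∞)
  have hanti : StrictAntiOn (fun y => G y / y ^ (n + l)) (Set.Ioi 0) := by
    intro x hx y hy hxy
    simp only [Set.mem_Ioi] at hx hy
    have Hx : HasSum (fun j => c j x / x ^ (n + l)) (G x / x ^ (n + l)) := by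
      rw [hGg x hx]; exact (hGsum x hx).div_const _
    have Hy : HasSum (fun j => c j y / y ^ (n + l)) (G y / y ^ (n + l)) := by
      rw [hGg y hy]; exact (hGsum y hy).div_const _
    refine hasSum_lt (i := n + l + 1) ?_ ?_ Hy Hx
    · intro j
      show c j y / y ^ (n + l) ≤ c j x / x ^ (n + l)
      rcases le_or_gt j n with h1 | h1
      · rw [hform0 j x h1, hform0 j y h1]
      rcases le_or_gt j (n + l) with h2 | h2
      · rw [hform1 j x hx h1 h2, hform1 j y hy h1 h2]
        exact div_le_div_of_nonneg_left (ha j).le (pow_pos hx _)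
          (pow_le_pow_left₀ hx.le hxy.le _)
      · rw [hform2 j x hx h2, hform2 j y hy h2]
        exact neg_le_neg
          (mul_le_mul_of_nonneg_left (pow_le_pow_left₀ hx.le hxy.le _) (ha j).le)
    · show c (n + l + 1) y / y ^ (n + l) < c (n + l + 1) x / x ^ (n + l)
      rw [hform2 (n + l + 1) x hx (by omega), hform2 (n + l + 1) y hy (by omega)]
      have h1 : n + l + 1 - (n + l) = 1 := by omega
      rw [h1, pow_one, pow_one]
      exact neg_lt_neg (mul_lt_mul_of_pos_left hxy (ha _))
  -- the tail sum at 1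
  have hTsum : Summable (fun k => a (k + (n + l + 1))) := by
    rw [summable_nat_add_iff (n + l + 1)]
    simpa using hsa 1 one_pos
  set T := ∑' k, a (k + (n + l + 1)) with hT
  have hT0 : 0 ≤ T := tsum_nonneg fun k => (ha _).le
  set A := a (n + l) with hA
  have hA0 : 0 < A := ha _
  set ε := min 1 (A / (2 * (T + 1))) with hε
  have hε0 : 0 < ε := lt_min one_pos (by positivity)
  have hε1 : ε ≤ 1 := min_le_left _ _
  -- G ε > 0
  have hGε : 0 < G ε := by
    have hs := hsum ε hε0
    have hsplit := Summable.sum_add_tsum_nat_add (f := fun j => c j ε) (n + l + 1) hs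
    have hfin : A * ε ^ (n + l) ≤ ∑ j ∈ Finset.range (n + l + 1), c j ε := by
      have hmem : n + l ∈ Finset.range (n + l + 1) := by simp
      have hval : c (n + l) ε = A * ε ^ (n + l) := by
        simp only [hc]
        rw [if_neg (by omega), if_pos le_rfl]
      rw [← hval]
      refine Finset.single_le_sum (f := fun j => c j ε) (fun j hj => ?_) hmem
      simp only [Finset.mem_range] at hj
      simp only [hc]
      split_ifs with h1 h2
      · exact le_rfl
      · exact mul_nonneg (ha j).le (pow_nonneg hε0.le j)
      · omega
    have htail : -(T * ε ^ (n + l + 1)) ≤ ∑' k, c (k + (n + l + 1)) ε := by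
      have hEq : ∀ k, c (k + (n + l + 1)) ε = -(a (k + (n + l + 1)) * ε ^ (k + (n + l + 1))) := by
        intro k
        simp only [hc]
        rw [if_neg (by omega), if_neg (by omega)]
      rw [tsum_congr hEq, tsum_neg, neg_le_neg_iff]
      have hsl : Summable (fun k => a (k + (n + l + 1)) * ε ^ (k + (n + l + 1))) :=
        (summable_nat_add_iff (f := fun j => a j * ε ^ j) (n + l + 1)).2 (hsa ε hε0)
      have hsr : Summable (fun k => a (k + (n + l + 1)) * ε ^ (n + l + 1)) :=
        hTsum.mul_right _
      calc ∑' k, a (k + (n + l + 1)) * ε ^ (k + (n + l + 1))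
          ≤ ∑' k, a (k + (n + l + 1)) * ε ^ (n + l + 1) := by
            refine Summable.tsum_le_tsum (fun k => ?_) hsl hsr
            refine mul_le_mul_of_nonneg_left ?_ (ha _).le
            calc ε ^ (k + (n + l + 1)) = ε ^ (n + l + 1) * ε ^ k := by
                  rw [← pow_add]; ring_nf
              _ ≤ ε ^ (n + l + 1) * 1 := by
                  refine mul_le_mul_of_nonneg_left ?_ (by positivity)
                  exact pow_le_one₀ hε0.le hε1
              _ = ε ^ (n + l + 1) := mul_one _
        _ = T * ε ^ (n + l + 1) := tsum_mul_right
    have hAT : T * ε < A := by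
      have h2 : ε ≤ A / (2 * (T + 1)) := min_le_right _ _
      rw [le_div_iff₀ (by positivity)] at h2
      nlinarith
    have hGε' : G ε = (∑ j ∈ Finset.range (n + l + 1), c j ε) + ∑' k, c (k + (n + l + 1)) ε := by
      rw [hGdef]; exact hsplit.symm
    have hp := pow_pos hε0 (n + l)
    have hps : ε ^ (n + l + 1) = ε ^ (n + l) * ε := pow_succ ε (n + l)
    nlinarith
  -- G R < 0
  set B := a (n + l + 1) with hB
  have hB0 : 0 < B := ha _
  set P := ∑ j ∈ Finset.range (n + l + 1), a j with hP
  set R := max 1 ((P + 1) / B) with hR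
  have hR1 : 1 ≤ R := le_max_left _ _
  have hR0 : 0 < R := lt_of_lt_of_le one_pos hR1
  have hBR : P + 1 ≤ B * R := by
    have h2 : (P + 1) / B ≤ R := le_max_right _ _
    rw [div_le_iff₀ hB0] at h2
    linarith
  have hGR : G R < 0 := by
    have hs := hsum R hR0
    have hsplit := Summable.sum_add_tsum_nat_add (f := fun j => c j R) (n + l + 2) hs
    have htail : (∑' k, c (k + (n + l + 2)) R) ≤ 0 := by
      refine tsum_nonpos fun k => ?_
      simp only [hc]
      rw [if_neg (by omega), if_neg (by omega)]
      have : 0 ≤ a (k + (n + l + 2)) * R ^ (k + (n + l + 2)) :=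
        mul_nonneg (ha _).le (pow_nonneg hR0.le _)
      linarith
    have hfin : ∑ j ∈ Finset.range (n + l + 2), c j R
        ≤ P * R ^ (n + l) - B * R ^ (n + l + 1) := by
      rw [Finset.sum_range_succ]
      have h2 : c (n + l + 1) R = -(B * R ^ (n + l + 1)) := by
        simp only [hc]
        rw [if_neg (by omega), if_neg (by omega)]
      have h1 : ∑ j ∈ Finset.range (n + l + 1), c j R ≤ P * R ^ (n + l) := by
        rw [hP, Finset.sum_mul]
        refine Finset.sum_le_sum fun j hj => ?_
        simp only [Finset.mem_range] at hj
        have hcj : c j R ≤ a j * R ^ j := by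
          simp only [hc]
          split_ifs with hh1 hh2
          · exact mul_nonneg (ha j).le (pow_nonneg hR0.le j)
          · exact le_rfl
          · have : 0 ≤ a j * R ^ j := mul_nonneg (ha j).le (pow_nonneg hR0.le j)
            linarith
        have hstep : a j * R ^ j ≤ a j * R ^ (n + l) :=
          mul_le_mul_of_nonneg_left (pow_le_pow_right₀ hR1 (by omega)) (ha j).le
        linarith
      rw [h2]
      linarith
    have hGR' : G R = (∑ j ∈ Finset.range (n + l + 2), c j R) + ∑' k, c (k + (n + l + 2)) R := by
      rw [hGdef]; exact hsplit.symm
    have hp := pow_pos hR0 (n + l)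
    have hps : R ^ (n + l + 1) = R ^ (n + l) * R := pow_succ R (n + l)
    nlinarith
  -- existence via IVT
  have hεR : ε ≤ R := le_trans hε1 hR1
  have hcontOn : ContinuousOn G (Set.Icc ε R) :=
    (hcont R hR0).mono (Set.Icc_subset_Icc hε0.le le_rfl)
  have hIVT := intermediate_value_Icc' hεR hcontOn
  have h0mem : (0 : ℝ) ∈ Set.Icc (G R) (G ε) := ⟨hGR.le, hGε.le⟩
  obtain ⟨y0, hy0mem, hy0⟩ := hIVT h0mem
  have hy00 : 0 < y0 := lt_of_lt_of_le hε0 hy0mem.1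
  refine ⟨y0, ⟨hy00, by rw [← hGg y0 hy00]; exact hy0⟩, ?_⟩
  intro z hz
  have hz0 : 0 < z := hz.1
  have h1 : G z / z ^ (n + l) = 0 := by rw [hGg z hz0, hz.2, zero_div]
  have h2 : G y0 / y0 ^ (n + l) = 0 := by rw [hy0, zero_div]
  exact hanti.injOn (Set.mem_Ioi.2 hz0) (Set.mem_Ioi.2 hy00) (by rw [h1, h2])
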